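/- Let s₁ < s₂ be real numbers, T > 0, and let S = {z ∈ ℂ : s₁ ≤ Re z ≤ s₂}. Let f : S → ℂ be continuous on S and holomorphic on the open strip {z : s₁ < Re z < s₂}, and suppose that f(z + iT) = f(z) for all z ∈ S and that Im f(z) = 0 whenever Re z = s₁ or Re z = s₂. Then f is constant on S, and its value is a real number. -/

import Mathlib

open Complex Set

private lemma strip_aux_norm_le_one (s₁ s₂ T : ℝ) (hs : s₁ < s₂) (hT : 0 < T)
    (g : ℂ → ℂ)
    (hcont : ContinuousOn g {z : ℂ | s₁ ≤ z.re ∧ z.re ≤ s₂})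
    (hhol : DifferentiableOn ℂ g {z : ℂ | s₁ < z.re ∧ z.re < s₂})
    (hper : ∀ z : ℂ, s₁ ≤ z.re → z.re ≤ s₂ → ∀ n : ℤ,
      g (z + (n : ℝ) * T * Complex.I) = g z)
    (hbd : ∀ z : ℂ, (z.re = s₁ ∨ z.re = s₂) → ‖g z‖ = 1) :
    ∀ z : ℂ, s₁ ≤ z.re → z.re ≤ s₂ → ‖g z‖ ≤ 1 := by
  set S : Set ℂ := {z : ℂ | s₁ ≤ z.re ∧ z.re ≤ s₂} with hS
  set U : Set ℂ := {z : ℂ | s₁ < z.re ∧ z.re < s₂} with hU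
  have hUeq : U = Complex.re ⁻¹' Ioo s₁ s₂ := rfl
  have hSeq : S = Complex.re ⁻¹' Icc s₁ s₂ := rfl
  have hUopen : IsOpen U := by
    rw [hUeq]; exact isOpen_Ioo.preimage Complex.continuous_re
  have hUconv : Convex ℝ U := by
    rw [hUeq]; exact (convex_Ioo s₁ s₂).linear_preimage Complex.reLm
  have hclU : closure U = S := by
    rw [hUeq, hSeq, Complex.closure_preimage_re, closure_Ioo hs.ne]
  -- the compact fundamental domain
  set K : Set ℂ := S ∩ Complex.im ⁻¹' Icc 0 T with hK
  have hKclosed : IsClosed K := by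
    rw [hK, hSeq]
    exact ((isClosed_Icc.preimage Complex.continuous_re).inter
      (isClosed_Icc.preimage Complex.continuous_im))
  have hKbdd : Bornology.IsBounded K := by
    rw [Metric.isBounded_iff_subset_closedBall 0]
    refine ⟨|s₁| + |s₂| + T, fun z hz => ?_⟩
    obtain ⟨⟨h1, h2⟩, h3, h4⟩ := hz
    simp only [Metric.mem_closedBall, dist_zero_right]
    calc ‖z‖ ≤ |z.re| + |z.im| := Complex.norm_le_abs_re_add_abs_im z
      _ ≤ (|s₁| + |s₂|) + T := by
          gcongr
          · have a1 := neg_abs_le s₁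
            have a2 := le_abs_self s₂
            have a3 := abs_nonneg s₁
            have a4 := abs_nonneg s₂
            rw [abs_le]
            constructor <;> linarith
          · rw [_root_.abs_of_nonneg h3]; exact h4
  have hKcompact : IsCompact K := Metric.isCompact_of_isClosed_isBounded hKclosed hKbdd
  have hKne : K.Nonempty := by
    refine ⟨(s₁ : ℂ), ⟨?_, ?_⟩, ?_, ?_⟩ <;> simp [hT.le, hs.le]
  obtain ⟨z₀, hz₀K, hmax⟩ := hKcompact.exists_isMaxOn hKne
    (hcont.mono (inter_subset_left)).norm
  -- every value of g on S is attained on K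
  have hred : ∀ z ∈ S, ∃ w ∈ K, g w = g z := by
    intro z hz
    set n : ℤ := ⌊z.im / T⌋ with hn
    have hwre : (z - (n : ℝ) * T * Complex.I).re = z.re := by simp
    have hwim : (z - (n : ℝ) * T * Complex.I).im = T * Int.fract (z.im / T) := by
      simp only [Complex.sub_im, Complex.mul_im, Complex.mul_re, Complex.I_im,
        Complex.I_re, Complex.ofReal_re, Complex.ofReal_im]
      rw [Int.fract, hn]; field_simp; ring
    refine ⟨z - (n : ℝ) * T * Complex.I, ⟨?_, ?_⟩, ?_⟩
    · show s₁ ≤ (z - (n : ℝ) * T * Complex.I).re ∧ (z - (n : ℝ) * T * Complex.I).re ≤ s₂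
      rw [hwre]; exact hz
    · rw [mem_preimage, hwim, mem_Icc]
      constructor
      · exact mul_nonneg hT.le (Int.fract_nonneg _)
      · nlinarith [Int.fract_lt_one (z.im / T)]
    · have hw : (z - (n : ℝ) * T * Complex.I).re = z.re := hwre
      have := hper (z - (n : ℝ) * T * Complex.I) (by rw [hw]; exact hz.1)
        (by rw [hw]; exact hz.2) n
      rw [sub_add_cancel] at this
      exact this.symm
  have hglobal : ∀ z ∈ S, ‖g z‖ ≤ ‖g z₀‖ := by
    intro z hz
    obtain ⟨w, hwK, hwz⟩ := hred z hz
    rw [← hwz]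
    exact hmax hwK
  -- it suffices to show ‖g z₀‖ = 1
  suffices h1 : ‖g z₀‖ ≤ 1 by
    intro z h2 h3; exact (hglobal z ⟨h2, h3⟩).trans h1
  rcases eq_or_lt_of_le hz₀K.1.1 with h | h
  · rw [hbd z₀ (Or.inl h.symm)]
  rcases eq_or_lt_of_le hz₀K.1.2 with h' | h'
  · rw [hbd z₀ (Or.inr h')]
  -- interior maximum: g is constant on S
  have hz₀U : z₀ ∈ U := ⟨h, h'⟩
  have hmaxU : IsMaxOn (norm ∘ g) U z₀ := by
    intro z hz
    exact hglobal z ⟨hz.1.le, hz.2.le⟩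
  have hdc : DiffContOnCl ℂ g U := ⟨hhol, by rw [hclU]; exact hcont⟩
  have hEq := Complex.eqOn_closure_of_isPreconnected_of_isMaxOn_norm
    hUconv.isPreconnected hUopen hdc hz₀U hmaxU
  rw [hclU] at hEq
  have hb : (s₁ : ℂ) ∈ S := ⟨by simp, by simp [hs.le]⟩
  have h1 : g (s₁ : ℂ) = g z₀ := hEq hb
  have h2 : ‖g (s₁ : ℂ)‖ = 1 := hbd _ (Or.inl (by simp))
  rw [h1] at h2
  rw [h2]

/-- A holomorphic function on a vertical strip, continuous up to the boundary,
periodic of period `iT`, whose imaginary part vanishes on both boundary lines,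
is a real constant. -/
theorem strip_periodic_real_boundary_constant
    (s₁ s₂ T : ℝ) (hs : s₁ < s₂) (hT : 0 < T)
    (f : ℂ → ℂ)
    (hcont : ContinuousOn f {z : ℂ | s₁ ≤ z.re ∧ z.re ≤ s₂})
    (hhol : DifferentiableOn ℂ f {z : ℂ | s₁ < z.re ∧ z.re < s₂})
    (hper : ∀ z : ℂ, s₁ ≤ z.re → z.re ≤ s₂ → f (z + T * Complex.I) = f z)
    (hbd : ∀ z : ℂ, (z.re = s₁ ∨ z.re = s₂) → (f z).im = 0) :
    ∃ c : ℝ, ∀ z : ℂ, s₁ ≤ z.re → z.re ≤ s₂ → f z = (c : ℂ) := by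
  set S : Set ℂ := {z : ℂ | s₁ ≤ z.re ∧ z.re ≤ s₂} with hSdef
  set U : Set ℂ := {z : ℂ | s₁ < z.re ∧ z.re < s₂} with hUdef
  -- integer periodicity
  have hperN : ∀ n : ℕ, ∀ z : ℂ, s₁ ≤ z.re → z.re ≤ s₂ →
      f (z + (n : ℝ) * T * Complex.I) = f z := by
    intro n
    induction n with
    | zero => intro z h1 h2; simp
    | succ n ih =>
      intro z h1 h2
      have key : z + ((n + 1 : ℕ) : ℝ) * T * Complex.I
          = (z + (n : ℝ) * T * Complex.I) + T * Complex.I := by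
        push_cast; ring
      rw [key, hper _ (by simpa using h1) (by simpa using h2), ih z h1 h2]
  have hperZ : ∀ z : ℂ, s₁ ≤ z.re → z.re ≤ s₂ → ∀ n : ℤ,
      f (z + (n : ℝ) * T * Complex.I) = f z := by
    intro z h1 h2 n
    rcases n.eq_nat_or_neg with ⟨m, rfl | rfl⟩
    · exact_mod_cast hperN m z h1 h2
    · have hre : (z + ((-(m : ℤ) : ℤ) : ℝ) * T * Complex.I).re = z.re := by simp
      have := hperN m (z + ((-(m : ℤ) : ℤ) : ℝ) * T * Complex.I)
        (by rw [hre]; exact h1) (by rw [hre]; exact h2)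
      have key : z + ((-(m : ℤ) : ℤ) : ℝ) * T * Complex.I + (m : ℝ) * T * Complex.I
          = z := by push_cast; ring
      rw [key] at this
      rw [this]
  -- Step 1 : the imaginary part of f vanishes on S
  have hIm0 : ∀ z : ℂ, s₁ ≤ z.re → z.re ≤ s₂ → (f z).im = 0 := by
    have hplus := strip_aux_norm_le_one s₁ s₂ T hs hT
      (fun z => Complex.exp (Complex.I * f z))
      (Complex.continuous_exp.comp_continuousOn (continuousOn_const.mul hcont))
      ((hhol.const_mul Complex.I).cexp)
      (fun z h1 h2 n => by
        show Complex.exp (Complex.I * f (z + (n : ℝ) * T * Complex.I))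
          = Complex.exp (Complex.I * f z)
        rw [hperZ z h1 h2 n])
      (fun z hz => by
        rw [Complex.norm_exp]
        simp [hbd z hz])
    have hminus := strip_aux_norm_le_one s₁ s₂ T hs hT
      (fun z => Complex.exp (-(Complex.I * f z)))
      (Complex.continuous_exp.comp_continuousOn
        (continuousOn_const.mul hcont).neg)
      ((hhol.const_mul Complex.I).neg.cexp)
      (fun z h1 h2 n => by
        show Complex.exp (-(Complex.I * f (z + (n : ℝ) * T * Complex.I)))
          = Complex.exp (-(Complex.I * f z))
        rw [hperZ z h1 h2 n])
      (fun z hz => by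
        rw [Complex.norm_exp]
        simp [hbd z hz])
    intro z h1 h2
    have e1 := hplus z h1 h2
    have e2 := hminus z h1 h2
    rw [Complex.norm_exp] at e1 e2
    simp only [Complex.mul_re, Complex.I_re, Complex.I_im, Complex.neg_re] at e1 e2
    rw [Real.exp_le_one_iff] at e1 e2
    simp only [zero_mul, one_mul, zero_sub, neg_neg] at e1 e2
    linarith
  -- Step 2 : exp (I * f) is constant on S
  have hUopen : IsOpen U := by
    have : U = Complex.re ⁻¹' Ioo s₁ s₂ := rfl
    rw [this]; exact isOpen_Ioo.preimage Complex.continuous_re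
  have hUconv : Convex ℝ U := by
    have : U = Complex.re ⁻¹' Ioo s₁ s₂ := rfl
    rw [this]; exact (convex_Ioo s₁ s₂).linear_preimage Complex.reLm
  have hclU : closure U = S := by
    have h1 : U = Complex.re ⁻¹' Ioo s₁ s₂ := rfl
    have h2 : S = Complex.re ⁻¹' Icc s₁ s₂ := rfl
    rw [h1, h2, Complex.closure_preimage_re, closure_Ioo hs.ne]
  set c₀ : ℂ := (((s₁ + s₂) / 2 : ℝ) : ℂ) with hc₀
  have hc₀U : c₀ ∈ U := by
    constructor <;> simp only [hc₀, Complex.ofReal_re] <;> linarith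
  have hc₀S : c₀ ∈ S := ⟨hc₀U.1.le, hc₀U.2.le⟩
  set h : ℂ → ℂ := fun z => Complex.exp (Complex.I * f z) with hh
  have hnorm : ∀ z ∈ S, ‖h z‖ = 1 := by
    intro z hz
    rw [hh]
    simp only
    rw [Complex.norm_exp]
    simp [hIm0 z hz.1 hz.2]
  have hmaxU : IsMaxOn (norm ∘ h) U c₀ := by
    intro z hz
    simp only [Function.comp_apply, mem_setOf_eq]
    rw [hnorm z ⟨hz.1.le, hz.2.le⟩, hnorm c₀ hc₀S]
  have hdc : DiffContOnCl ℂ h U := by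
    refine ⟨(hhol.const_mul Complex.I).cexp, ?_⟩
    rw [hclU]
    exact Complex.continuous_exp.comp_continuousOn (continuousOn_const.mul hcont)
  have hEq := Complex.eqOn_closure_of_isPreconnected_of_isMaxOn_norm
    hUconv.isPreconnected hUopen hdc hc₀U hmaxU
  rw [hclU] at hEq
  -- Step 3 : f is constant on S
  set v : ℂ := f c₀ with hv
  have hdiff : ∀ z ∈ S, ∃ n : ℤ, f z = v + n * (2 * Real.pi) := by
    intro z hz
    have he : Complex.exp (Complex.I * f z) = Complex.exp (Complex.I * v) := hEq hz
    rw [Complex.exp_eq_exp_iff_exists_int] at he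
    obtain ⟨n, hn⟩ := he
    refine ⟨n, ?_⟩
    have h2 : Complex.I * f z = Complex.I * (v + n * (2 * Real.pi)) := by
      rw [hn]; ring
    exact mul_left_cancel₀ Complex.I_ne_zero h2
  -- clopen argument on the preconnected set S
  have hSpre : IsPreconnected S := by
    rw [← hclU]; exact hUconv.isPreconnected.closure
  haveI : PreconnectedSpace S := Subtype.preconnectedSpace hSpre
  set F : S → ℂ := S.restrict f with hF
  have hFcont : Continuous F := continuousOn_iff_continuous_restrict.mp hcont
  set A : Set S := {x : S | f ↑x = v} with hA
  have hAopen : IsOpen A := by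
    have : A = F ⁻¹' Metric.ball v (2 * Real.pi) := by
      ext x
      simp only [hA, mem_setOf_eq, mem_preimage, Metric.mem_ball, hF,
        Set.restrict_apply]
      change (f ↑x = v) ↔ dist (f ↑x) v < 2 * Real.pi
      constructor
      · intro hx
        rw [hx]
        simp [Real.pi_pos]
      · intro hx
        obtain ⟨n, hn⟩ := hdiff ↑x x.2
        have hdist : dist (f ↑x) v = |(n : ℝ)| * (2 * Real.pi) := by
          rw [hn, dist_eq_norm]
          have : v + (n : ℂ) * (2 * Real.pi) - v = (((n : ℝ) * (2 * Real.pi) : ℝ) : ℂ) := by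
            push_cast; ring
          rw [this, Complex.norm_real, Real.norm_eq_abs, abs_mul,
            _root_.abs_of_nonneg (by positivity : (0:ℝ) ≤ 2 * Real.pi)]
        rw [hdist] at hx
        have hn0 : n = 0 := by
          by_contra hne
          have : (1 : ℝ) ≤ |(n : ℝ)| := by
            rw [← Int.cast_abs]
            exact_mod_cast Int.one_le_abs (by omega)
          nlinarith [Real.pi_pos]
        rw [hn0] at hn
        simpa using hn
    rw [this]
    exact Metric.isOpen_ball.preimage hFcont
  have hAclosed : IsClosed A := by
    have : A = F ⁻¹' {v} := rfl
    rw [this]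
    exact isClosed_singleton.preimage hFcont
  have hAne : A.Nonempty := ⟨⟨c₀, hc₀S⟩, rfl⟩
  have hAuniv : A = univ :=
    IsClopen.eq_univ ⟨hAclosed, hAopen⟩ hAne
  -- conclude
  refine ⟨v.re, fun z h1 h2 => ?_⟩
  have hzA : (⟨z, h1, h2⟩ : S) ∈ A := hAuniv ▸ mem_univ _
  have hfz : f z = v := hzA
  rw [hfz]
  have hvi : v.im = 0 := hIm0 c₀ hc₀S.1 hc₀S.2
  exact Complex.ext (by simp) (by simp [hvi])
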